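/- Suppose (E_m)_{m≥0} are nonnegative reals, μ ≥ 0, and δ, κ > 0 are such that E_r + κ ∑_{m=1}^{r} A_m − θ ∑_{m=1}^{r} E_{m−1} A_m ≤ μ for all r ≤ N, with A_m ≥ 0, and θ μ ≤ κ/2. Then E_r + (κ/2) ∑_{m=1}^{r} A_m ≤ μ for all r ≤ N. -/
import Mathlib

theorem inductive_bootstrap
    (N : ℕ) (E A : ℕ → ℝ) (μ δ κ θ : ℝ)
    (hE : ∀ m, 0 ≤ E m) (hA : ∀ m, 0 ≤ A m)
    (hμ : 0 ≤ μ) (hδ : 0 < δ) (hκ : 0 < κ) (hθ : 0 ≤ θ)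
    (h : ∀ r ≤ N, E r + κ * ∑ m ∈ Finset.Icc 1 r, A m
          - θ * ∑ m ∈ Finset.Icc 1 r, E (m - 1) * A m ≤ μ)
    (hsmall : θ * μ ≤ κ / 2) :
    ∀ r ≤ N, E r + (κ / 2) * ∑ m ∈ Finset.Icc 1 r, A m ≤ μ := by
  intro r
  induction r using Nat.strong_induction_on with
  | _ r ih =>
    intro hr
    have key : θ * ∑ m ∈ Finset.Icc 1 r, E (m - 1) * A m
        ≤ (κ / 2) * ∑ m ∈ Finset.Icc 1 r, A m := by
      rw [Finset.mul_sum, Finset.mul_sum]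
      apply Finset.sum_le_sum
      intro m hm
      obtain ⟨hm1, hm2⟩ := Finset.mem_Icc.mp hm
      have hEm : E (m - 1) ≤ μ := by
        have h1 := ih (m - 1) (by omega) (by omega)
        have h2 : 0 ≤ (κ / 2) * ∑ j ∈ Finset.Icc 1 (m - 1), A j :=
          mul_nonneg (by positivity) (Finset.sum_nonneg fun j _ => hA j)
        linarith
      calc θ * (E (m - 1) * A m) = (θ * E (m - 1)) * A m := by ring
        _ ≤ (θ * μ) * A m := by
            apply mul_le_mul_of_nonneg_right _ (hA m)
            exact mul_le_mul_of_nonneg_left hEm hθ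
        _ ≤ (κ / 2) * A m := mul_le_mul_of_nonneg_right hsmall (hA m)
    have := h r hr
    linarith
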